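/- arXiv:2106.12972 — 2 statements merged into one kernel-verified Lean document; each statement's English description precedes it below -/
import Mathlib

section
/- For every k ≥ 1 and all h₁, h₂ ∈ H, one has [h₁h₂, x, (p^k−1)…, x] ≡ [h₁, x, (p^k−1)…, x] · [h₂, x, (p^k−1)…, x] modulo L_k, i.e. ([h₁,x,(p^k−1)…,x]·[h₂,x,(p^k−1)…,x])^{−1}·[h₁h₂,x,(p^k−1)…,x] ∈ L_k. (Lemma 5.1(ii) of the paper.) -/
namespace Paper

variable {G : Type*} [Group G]

/-- The paper's commutator `[a,b] = a⁻¹ b⁻¹ a b`. -/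
def pc {G : Type*} [Group G] (a b : G) : G := a⁻¹ * b⁻¹ * a * b

/-- The left-normed iterated commutator `[a, x, (r)…, x]`. -/
def itc {G : Type*} [Group G] (x a : G) : ℕ → G
  | 0 => a
  | r + 1 => pc (itc x a r) x

/-- `c_i`, where `c_1 = y` and `c_{i+1} = [c_i, x]`; equivalently `c_i = [y, x, (i-1)…, x]`. -/
def cc (x y : G) (i : ℕ) : G := itc x y (i - 1)

/-- `z_{m,n} = [c_m, c_n]`. -/
def zz (x y : G) (m n : ℕ) : G := pc (cc x y m) (cc x y n)

/-- `H = ⟨c_i : i ≥ 1⟩`. -/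
def Hsub (x y : G) : Subgroup G :=
  Subgroup.closure {g | ∃ i, 1 ≤ i ∧ g = cc x y i}

/-- `Z = ⟨z_{m,n} : m, n ≥ 1⟩` (odd-prime case). -/
def ZsubP (x y : G) : Subgroup G :=
  Subgroup.closure {g | ∃ m n, 1 ≤ m ∧ 1 ≤ n ∧ g = zz x y m n}

/-- `w_{i,j,k} = ∏_{t=1}^{p^k−1} [z_{i+t,j+t−1}, x, (p^k−1−t)…, x]`,
factors in order of increasing `t` (reindexed by `t ↦ t+1`). -/
def wwP (p : ℕ) (x y : G) (i j k : ℕ) : G :=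
  ((List.range (p ^ k - 1)).map
    (fun t => itc x (zz x y (i + t + 1) (j + t)) (p ^ k - 2 - t))).prod

/-- `d_k(h) = [h,x,(p^k−1)…,x]⁻¹ · x^{−p^k} · (xh)^{p^k}`. -/
def ddP (p : ℕ) (x y : G) (k : ℕ) (h : G) : G :=
  (itc x h (p ^ k - 1))⁻¹ * (x ^ p ^ k)⁻¹ * (x * h) ^ p ^ k

/-- `L_k`, the normal closure of `{w_{i,j,k} : i,j ≥ 1} ∪ {d_k(y)} ∪ {z_{m,n} : m ≥ p^k, n ≥ 1}`. -/
def LsubP (p : ℕ) (x y : G) (k : ℕ) : Subgroup G :=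
  Subgroup.normalClosure (({g | ∃ i j, 1 ≤ i ∧ 1 ≤ j ∧ g = wwP p x y i j k} ∪
      {ddP p x y k y}) ∪
    {g | ∃ m n, p ^ k ≤ m ∧ 1 ≤ n ∧ g = zz x y m n})

/-- `Γ^{p^k} = ⟨g^{p^k} : g ∈ Γ⟩`. -/
def powSubP (G : Type*) [Group G] (p k : ℕ) : Subgroup G :=
  Subgroup.closure {g | ∃ a : G, g = a ^ p ^ k}

/-- `Θ̃_k = ⟨z_{m,n} : m ≥ p^k, n ≥ 1⟩`. -/
def ThetaT (p : ℕ) (x y : G) (k : ℕ) : Subgroup G :=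
  Subgroup.closure {g | ∃ m n, p ^ k ≤ m ∧ 1 ≤ n ∧ g = zz x y m n}

/-- `[A, g] = ⟨[a,g] : a ∈ A⟩`. -/
def commSub (A : Subgroup G) (g : G) : Subgroup G :=
  Subgroup.closure {c | ∃ a ∈ A, c = pc a g}

/-- The `r`-fold iterate `[A, g, (r)…, g]`. -/
def itcSub (A : Subgroup G) (g : G) : ℕ → Subgroup G
  | 0 => A
  | r + 1 => commSub (itcSub A g r) g

/-- `Λ̃_k`. -/
def LambdaT (p : ℕ) (x y : G) (k : ℕ) : Subgroup G :=
  Subgroup.closure {g | ∃ m n, g = itc (x ^ p ^ (k - 1)) (zz x y m n) (p - 1) ∧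
    ((p ^ (k - 1) ≤ m ∧ m < p ^ k ∧
        max 1 (m - m / p ^ (k - 1) * p ^ (k - 1)) ≤ n ∧ n < p ^ (k - 1)) ∨
      (∃ i, 2 ≤ i ∧ i ≤ p - 2 ∧ m = i * p ^ (k - 1) ∧ n = p ^ (k - 1)))}

/-- `w̃_{i,j,k} = ∏_{t=1}^{p^k−p^{k−1}} [z_{i+t,j+t−1}, x, (p^k−p^{k−1}−t)…, x]`,
factors in order of increasing `t` (reindexed by `t ↦ t+1`). -/
def wwT (p : ℕ) (x y : G) (i j k : ℕ) : G :=
  ((List.range (p ^ k - p ^ (k - 1))).map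
    (fun t => itc x (zz x y (i + t + 1) (j + t)) (p ^ k - p ^ (k - 1) - 1 - t))).prod

/-- `d̃_k(h) = [h,x,(p^k−p^{k−1})…,x]⁻¹ · x^{−p^k} · (x^{p^{k−1}}h)^p`. -/
def ddT (p : ℕ) (x y : G) (k : ℕ) (h : G) : G :=
  (itc x h (p ^ k - p ^ (k - 1)))⁻¹ * (x ^ p ^ k)⁻¹ * (x ^ p ^ (k - 1) * h) ^ p

/-- `L̃_k`, the normal closure of `{w̃_{i,j,k} : i,j ≥ p^{k−1}} ∪ {d̃_k(y)}`. -/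
def LsubT (p : ℕ) (x y : G) (k : ℕ) : Subgroup G :=
  Subgroup.normalClosure
    ({g | ∃ i j, p ^ (k - 1) ≤ i ∧ p ^ (k - 1) ≤ j ∧ g = wwT p x y i j k} ∪
      {ddT p x y k y})

/-- `Γ_{(k)} = ⟨c_j (j ≥ p^{k−1}), z_{m,n} (m > n ≥ 1, m + n ≥ p^{k−1})⟩`. -/
def GammaK (p : ℕ) (x y : G) (k : ℕ) : Subgroup G :=
  Subgroup.closure ({g | ∃ j, p ^ (k - 1) ≤ j ∧ g = cc x y j} ∪
    {g | ∃ m n, 1 ≤ n ∧ n < m ∧ p ^ (k - 1) ≤ m + n ∧ g = zz x y m n})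

-- pure group identities
lemma pc_mul_left (a b c : G) : pc (a * b) c = b⁻¹ * pc a c * b * pc b c := by
  simp only [pc]; group

lemma pc_mul_right (a b c : G) : pc a (b * c) = pc a c * (c⁻¹ * pc a b * c) := by
  simp only [pc]; group

lemma pc_inv_left (a c : G) : pc a⁻¹ c = a * (pc a c)⁻¹ * a⁻¹ := by
  simp only [pc]; group

lemma pc_inv_right (a c : G) : pc a c⁻¹ = c * (pc a c)⁻¹ * c⁻¹ := by
  simp only [pc]; group

lemma pc_one_left (b : G) : pc 1 b = 1 := by simp [pc]

lemma pc_one_right (a : G) : pc a 1 = 1 := by simp [pc]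

lemma pc_conj (g a b : G) : g⁻¹ * pc a b * g = pc (g⁻¹ * a * g) (g⁻¹ * b * g) := by
  simp only [pc]; group

lemma pc_eq_one_of_comm {a b : G} (h : a * b = b * a) : pc a b = 1 := by
  simp only [pc, mul_assoc]
  rw [h]
  simp

lemma conj_eq_of_comm {a b : G} (h : a * b = b * a) : b⁻¹ * a * b = a := by
  rw [mul_assoc, h, ← mul_assoc, inv_mul_cancel, one_mul]

lemma itc_succ (x a : G) (r : ℕ) : itc x a (r + 1) = pc (itc x a r) x := rfl

lemma itc_one (x : G) (r : ℕ) : itc x (1 : G) r = 1 := by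
  induction r with
  | zero => rfl
  | succ n ih => rw [itc_succ, ih, pc_one_left]

lemma itc_add (x a : G) (m n : ℕ) : itc x (itc x a m) n = itc x a (m + n) := by
  induction n with
  | zero => rfl
  | succ n ih => rw [itc_succ, ih]; rfl

lemma itc_cc (x y : G) (i s : ℕ) (hi : 1 ≤ i) : itc x (cc x y i) s = cc x y (i + s) := by
  unfold cc
  rw [itc_add]
  congr 1
  omega

lemma pc_cc_x (x y : G) (i : ℕ) (hi : 1 ≤ i) : pc (cc x y i) x = cc x y (i + 1) := by
  have h := itc_cc x y i 1 hi
  simpa only [itc] using h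

lemma cc_mem (x y : G) (i : ℕ) (hi : 1 ≤ i) : cc x y i ∈ Hsub x y :=
  Subgroup.subset_closure ⟨i, hi, rfl⟩

lemma zz_mem (x y : G) (m n : ℕ) (hm : 1 ≤ m) (hn : 1 ≤ n) : zz x y m n ∈ ZsubP x y :=
  Subgroup.subset_closure ⟨m, n, hm, hn, rfl⟩

lemma Z_le_H (x y : G) : ZsubP x y ≤ Hsub x y := by
  rw [ZsubP, Subgroup.closure_le]
  rintro g ⟨m, n, hm, hn, rfl⟩
  have h1 := cc_mem x y m hm
  have h2 := cc_mem x y n hn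
  exact mul_mem (mul_mem (mul_mem (inv_mem h1) (inv_mem h2)) h1) h2

section WithComm

variable (x y : G) (hca : ∀ z ∈ ZsubP x y, ∀ h ∈ Hsub x y, z * h = h * z)

include hca

lemma comm_zh {z h : G} (hz : z ∈ ZsubP x y) (hh : h ∈ Hsub x y) : z * h = h * z :=
  hca z hz h hh

omit hca in
lemma comm_zz (x y : G) (hca : ∀ z ∈ ZsubP x y, ∀ h ∈ Hsub x y, z * h = h * z)
    {z w : G} (hz : z ∈ ZsubP x y) (hw : w ∈ ZsubP x y) : z * w = w * z :=
  hca z hz w (Z_le_H x y hw)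

lemma conj_hz {z h : G} (hz : z ∈ ZsubP x y) (hh : h ∈ Hsub x y) : h⁻¹ * z * h = z :=
  conj_eq_of_comm (hca z hz h hh)

lemma conj_zh {z h : G} (hz : z ∈ ZsubP x y) (hh : h ∈ Hsub x y) : z⁻¹ * h * z = h :=
  conj_eq_of_comm (hca z hz h hh).symm

lemma conj_x_mem {h : G} (hh : h ∈ Hsub x y) : x⁻¹ * h * x ∈ Hsub x y := by
  have hh' : h ∈ Subgroup.closure {g | ∃ i, 1 ≤ i ∧ g = cc x y i} := hh
  clear hh
  induction hh' using Subgroup.closure_induction with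
  | mem g hg =>
    obtain ⟨i, hi, rfl⟩ := hg
    have he : x⁻¹ * cc x y i * x = cc x y i * cc x y (i + 1) := by
      rw [← pc_cc_x x y i hi]
      simp only [pc]; group
    rw [he]
    exact mul_mem (cc_mem x y i hi) (cc_mem x y (i + 1) (by omega))
  | one => simpa using one_mem _
  | mul a b ha hb iha ihb =>
    have he : x⁻¹ * (a * b) * x = (x⁻¹ * a * x) * (x⁻¹ * b * x) := by group
    rw [he]; exact mul_mem iha ihb
  | inv a ha iha =>
    have he : x⁻¹ * a⁻¹ * x = (x⁻¹ * a * x)⁻¹ := by group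
    rw [he]; exact inv_mem iha

lemma pc_x_mem {h : G} (hh : h ∈ Hsub x y) : pc h x ∈ Hsub x y := by
  have he : pc h x = h⁻¹ * (x⁻¹ * h * x) := by simp only [pc]; group
  rw [he]
  exact mul_mem (inv_mem hh) (conj_x_mem x y hca hh)

lemma itc_mem_H {h : G} (hh : h ∈ Hsub x y) (r : ℕ) : itc x h r ∈ Hsub x y := by
  induction r with
  | zero => exact hh
  | succ n ih => exact pc_x_mem x y hca ih

lemma pc_HH_mem {u v : G} (hu : u ∈ Hsub x y) (hv : v ∈ Hsub x y) : pc u v ∈ ZsubP x y := by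
  have hu' : u ∈ Subgroup.closure {g | ∃ i, 1 ≤ i ∧ g = cc x y i} := hu
  have hv' : v ∈ Subgroup.closure {g | ∃ i, 1 ≤ i ∧ g = cc x y i} := hv
  clear hu hv
  induction hu', hv' using Subgroup.closure_induction₂ with
  | mem a b ha hb =>
    obtain ⟨i, hi, rfl⟩ := ha
    obtain ⟨j, hj, rfl⟩ := hb
    exact zz_mem x y i j hi hj
  | one_left b hb => rw [pc_one_left]; exact one_mem _
  | one_right a ha => rw [pc_one_right]; exact one_mem _
  | mul_left a b c ha hb hc iha ihb =>
    rw [pc_mul_left, conj_hz x y hca iha hb]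
    exact mul_mem iha ihb
  | mul_right b c a hb hc ha ihb ihc =>
    rw [pc_mul_right, conj_hz x y hca ihb hc]
    exact mul_mem ihc ihb
  | inv_left a b ha hb iha =>
    rw [pc_inv_left]
    have he : a * (pc a b)⁻¹ * a⁻¹ = (pc a b)⁻¹ := by
      have := conj_hz x y hca (inv_mem iha) (inv_mem ha)
      simpa using this
    rw [he]; exact inv_mem iha
  | inv_right a b ha hb iha =>
    rw [pc_inv_right]
    have he : b * (pc a b)⁻¹ * b⁻¹ = (pc a b)⁻¹ := by
      have := conj_hz x y hca (inv_mem iha) (inv_mem hb)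
      simpa using this
    rw [he]; exact inv_mem iha

lemma pc_x_Z_mem {z : G} (hz : z ∈ ZsubP x y) : pc z x ∈ ZsubP x y := by
  have hz' : z ∈ Subgroup.closure {g | ∃ m n, 1 ≤ m ∧ 1 ≤ n ∧ g = zz x y m n} := hz
  clear hz
  induction hz' using Subgroup.closure_induction with
  | mem g hg =>
    obtain ⟨m, n, hm, hn, rfl⟩ := hg
    have he : pc (zz x y m n) x = (zz x y m n)⁻¹ * pc (x⁻¹ * cc x y m * x) (x⁻¹ * cc x y n * x) := by
      rw [zz, ← pc_conj]
      simp only [pc]; group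
    rw [he]
    exact mul_mem (inv_mem (zz_mem x y m n hm hn))
      (pc_HH_mem x y hca (conj_x_mem x y hca (cc_mem x y m hm))
        (conj_x_mem x y hca (cc_mem x y n hn)))
  | one => rw [pc_one_left]; exact one_mem _
  | mul a b ha hb iha ihb =>
    rw [pc_mul_left, conj_hz x y hca iha (Z_le_H x y hb)]
    exact mul_mem iha ihb
  | inv a ha iha =>
    rw [pc_inv_left]
    have he : a * (pc a x)⁻¹ * a⁻¹ = (pc a x)⁻¹ := by
      have := conj_hz x y hca (inv_mem iha) (inv_mem (Z_le_H x y ha))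
      simpa using this
    rw [he]; exact inv_mem iha

lemma pc_x_Z_mul {z w : G} (hz : z ∈ ZsubP x y) (hw : w ∈ ZsubP x y) :
    pc (z * w) x = pc z x * pc w x := by
  rw [pc_mul_left, conj_hz x y hca (pc_x_Z_mem x y hca hz) (Z_le_H x y hw)]

lemma itc_mem_Z {z : G} (hz : z ∈ ZsubP x y) (r : ℕ) : itc x z r ∈ ZsubP x y := by
  induction r with
  | zero => exact hz
  | succ n ih => exact pc_x_Z_mem x y hca ih

end WithComm

/-- The deviation from multiplicativity of `h ↦ [h, x, (r)…, x]`. -/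
def zeta (x a b : G) (r : ℕ) : G := (itc x a r * itc x b r)⁻¹ * itc x (a * b) r

lemma itc_zero (x a : G) : itc x a 0 = a := rfl

lemma itc_mul_eq (x a b : G) (r : ℕ) :
    itc x (a * b) r = itc x a r * itc x b r * zeta x a b r := by
  simp only [zeta]; group

lemma zeta_zero (x a b : G) : zeta x a b 0 = 1 := by simp only [zeta, itc]; group

lemma zeta_one_left (x b : G) (r : ℕ) : zeta x 1 b r = 1 := by
  simp [zeta, itc_one]

lemma swap_mid {a b c d : G} (h : b * c = c * b) : a * b * (c * d) = a * c * (b * d) := by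
  rw [mul_assoc, ← mul_assoc b, h, mul_assoc, ← mul_assoc]

section ZetaSec

variable (x y : G) (hca : ∀ z ∈ ZsubP x y, ∀ h ∈ Hsub x y, z * h = h * z)

include hca

lemma pc_HZ_one {u z : G} (hu : u ∈ Hsub x y) (hz : z ∈ ZsubP x y) : pc u z = 1 :=
  pc_eq_one_of_comm (comm_zh x y hca hz hu).symm

lemma pc_drop_right {u v z : G} (hu : u ∈ Hsub x y) (hv : v ∈ Hsub x y)
    (hz : z ∈ ZsubP x y) : pc u (v * z) = pc u v := by
  rw [pc_mul_right, pc_HZ_one x y hca hu hz,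
    conj_zh x y hca hz (Z_le_H x y (pc_HH_mem x y hca hu hv)), one_mul]

lemma pc_drop_left {u v z : G} (hu : u ∈ Hsub x y) (hv : v ∈ Hsub x y)
    (hz : z ∈ ZsubP x y) : pc (u * z) v = pc u v := by
  rw [pc_mul_left, pc_eq_one_of_comm ((comm_zh x y hca hz hv)),
    conj_zh x y hca hz (Z_le_H x y (pc_HH_mem x y hca hu hv)), mul_one]

lemma pc_add_left {u v w : G} (hu : u ∈ Hsub x y) (hv : v ∈ Hsub x y)
    (hw : w ∈ Hsub x y) : pc (u * v) w = pc u w * pc v w := by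
  rw [pc_mul_left, conj_hz x y hca (pc_HH_mem x y hca hu hw) hv]

lemma pc_add_right {u v w : G} (hu : u ∈ Hsub x y) (hv : v ∈ Hsub x y)
    (hw : w ∈ Hsub x y) : pc u (v * w) = pc u v * pc u w := by
  rw [pc_mul_right, conj_hz x y hca (pc_HH_mem x y hca hu hv) hw]
  exact comm_zz x y hca (pc_HH_mem x y hca hu hw) (pc_HH_mem x y hca hu hv)

lemma pc_x_mulHZ {u z : G} (hu : u ∈ Hsub x y) (hz : z ∈ ZsubP x y) :
    pc (u * z) x = pc u x * pc z x := by
  rw [pc_mul_left, conj_zh x y hca hz (pc_x_mem x y hca hu)]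

lemma pc_x_mulHH {u v : G} (hu : u ∈ Hsub x y) (hv : v ∈ Hsub x y) :
    pc (u * v) x = pc u x * pc v x * pc (pc u x) v := by
  rw [pc_mul_left]
  have h1 : v⁻¹ * pc u x * v = pc u x * pc (pc u x) v := by simp only [pc]; group
  rw [h1, mul_assoc,
    comm_zh x y hca (pc_HH_mem x y hca (pc_x_mem x y hca hu) hv) (pc_x_mem x y hca hv),
    ← mul_assoc]

lemma zeta_succ {a b : G} (ha : a ∈ Hsub x y) (hb : b ∈ Hsub x y) (r : ℕ)
    (hz : zeta x a b r ∈ ZsubP x y) :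
    zeta x a b (r + 1) = pc (itc x a (r + 1)) (itc x b r) * pc (zeta x a b r) x := by
  have hA : itc x a r ∈ Hsub x y := itc_mem_H x y hca ha r
  have hB : itc x b r ∈ Hsub x y := itc_mem_H x y hca hb r
  have key : itc x (a * b) (r + 1) = itc x a (r + 1) * itc x b (r + 1) *
      (pc (itc x a (r + 1)) (itc x b r) * pc (zeta x a b r) x) := by
    rw [itc_succ x (a*b) r, itc_mul_eq x a b r,
      pc_x_mulHZ x y hca (mul_mem hA hB) hz,
      pc_x_mulHH x y hca hA hB]
    rw [← itc_succ, ← itc_succ]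
    group
  rw [zeta, key]
  group

lemma zeta_mem {a b : G} (ha : a ∈ Hsub x y) (hb : b ∈ Hsub x y) (r : ℕ) :
    zeta x a b r ∈ ZsubP x y := by
  induction r with
  | zero => rw [zeta_zero]; exact one_mem _
  | succ n ih =>
    rw [zeta_succ x y hca ha hb n ih]
    exact mul_mem
      (pc_HH_mem x y hca (itc_mem_H x y hca ha (n + 1)) (itc_mem_H x y hca hb n))
      (pc_x_Z_mem x y hca ih)

lemma zeta_mul_left {a b c : G} (ha : a ∈ Hsub x y) (hb : b ∈ Hsub x y)
    (hc : c ∈ Hsub x y) (r : ℕ) :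
    zeta x (a * b) c r = zeta x a c r * zeta x b c r := by
  induction r with
  | zero => simp [zeta_zero]
  | succ n ih =>
    have hzab := zeta_mem x y hca (mul_mem ha hb) hc n
    have hzac := zeta_mem x y hca ha hc n
    have hzbc := zeta_mem x y hca hb hc n
    have hA := itc_mem_H x y hca ha (n + 1)
    have hB := itc_mem_H x y hca hb (n + 1)
    have hC := itc_mem_H x y hca hc n
    rw [zeta_succ x y hca (mul_mem ha hb) hc n hzab,
      zeta_succ x y hca ha hc n hzac, zeta_succ x y hca hb hc n hzbc, ih,
      itc_mul_eq x a b (n + 1),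
      pc_drop_left x y hca (mul_mem hA hB) hC (zeta_mem x y hca ha hb (n + 1)),
      pc_add_left x y hca hA hB hC,
      pc_x_Z_mul x y hca hzac hzbc]
    exact swap_mid (comm_zz x y hca (pc_HH_mem x y hca hB hC) (pc_x_Z_mem x y hca hzac))

lemma zeta_mul_right {a b c : G} (ha : a ∈ Hsub x y) (hb : b ∈ Hsub x y)
    (hc : c ∈ Hsub x y) (r : ℕ) :
    zeta x a (b * c) r = zeta x a b r * zeta x a c r := by
  induction r with
  | zero => simp [zeta_zero]
  | succ n ih =>
    have hzabc := zeta_mem x y hca ha (mul_mem hb hc) n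
    have hzab := zeta_mem x y hca ha hb n
    have hzac := zeta_mem x y hca ha hc n
    have hA := itc_mem_H x y hca ha (n + 1)
    have hB := itc_mem_H x y hca hb n
    have hC := itc_mem_H x y hca hc n
    rw [zeta_succ x y hca ha (mul_mem hb hc) n hzabc,
      zeta_succ x y hca ha hb n hzab, zeta_succ x y hca ha hc n hzac, ih,
      itc_mul_eq x b c n,
      pc_drop_right x y hca hA (mul_mem hB hC) (zeta_mem x y hca hb hc n),
      pc_add_right x y hca hA hB hC,
      pc_x_Z_mul x y hca hzab hzac]
    exact swap_mid (comm_zz x y hca (pc_HH_mem x y hca hA hC) (pc_x_Z_mem x y hca hzab))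

lemma zeta_inv_left {a b : G} (ha : a ∈ Hsub x y) (hb : b ∈ Hsub x y) (r : ℕ) :
    zeta x a⁻¹ b r = (zeta x a b r)⁻¹ := by
  have h := zeta_mul_left x y hca (inv_mem ha) ha hb r
  rw [inv_mul_cancel, zeta_one_left] at h
  exact eq_inv_of_mul_eq_one_left h.symm

end ZetaSec


lemma zeta_one_right (x a : G) (r : ℕ) : zeta x a 1 r = 1 := by
  simp only [zeta, itc_one, mul_one]; group

section FinalSec

variable (x y : G) (hca : ∀ z ∈ ZsubP x y, ∀ h ∈ Hsub x y, z * h = h * z)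

include hca

lemma zeta_inv_right {a b : G} (ha : a ∈ Hsub x y) (hb : b ∈ Hsub x y) (r : ℕ) :
    zeta x a b⁻¹ r = (zeta x a b r)⁻¹ := by
  have h := zeta_mul_right x y hca ha hb (inv_mem hb) r
  rw [mul_inv_cancel, zeta_one_right] at h
  exact (inv_eq_of_mul_eq_one_right h.symm).symm

lemma pc_x_prod {L : List G} (hL : ∀ g ∈ L, g ∈ ZsubP x y) :
    pc L.prod x = (L.map (fun g => pc g x)).prod := by
  induction L with
  | nil => simp [pc_one_left]
  | cons a t ih =>
    simp only [List.prod_cons, List.map_cons]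
    rw [pc_x_Z_mul x y hca (hL a List.mem_cons_self)
        ((ZsubP x y).list_prod_mem (fun g hg => hL g (List.mem_cons_of_mem a hg))),
      ih (fun g hg => hL g (List.mem_cons_of_mem a hg))]

lemma zeta_cc (i j : ℕ) (hi : 1 ≤ i) (hj : 1 ≤ j) (r : ℕ) :
    zeta x (cc x y i) (cc x y j) r =
      ((List.range r).map
        (fun t => itc x (zz x y (i + t + 1) (j + t)) (r - 1 - t))).prod := by
  induction r with
  | zero => simp [zeta_zero]
  | succ n ih =>
    have hmem : ∀ t : ℕ, zz x y (i + t + 1) (j + t) ∈ ZsubP x y := fun t =>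
      zz_mem x y _ _ (by omega) (by omega)
    have hLmem : ∀ g ∈ (List.range n).map
        (fun t => itc x (zz x y (i + t + 1) (j + t)) (n - 1 - t)), g ∈ ZsubP x y := by
      intro g hg
      obtain ⟨t, _, rfl⟩ := List.mem_map.mp hg
      exact itc_mem_Z x y hca (hmem t) _
    rw [zeta_succ x y hca (cc_mem x y i hi) (cc_mem x y j hj) n
        (zeta_mem x y hca (cc_mem x y i hi) (cc_mem x y j hj) n), ih,
      itc_cc x y i (n + 1) hi, itc_cc x y j n hj,
      pc_x_prod x y hca hLmem, List.map_map]
    have e1 : pc (cc x y (i + (n + 1))) (cc x y (j + n)) = zz x y (i + n + 1) (j + n) := by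
      have e0 : i + (n + 1) = i + n + 1 := by omega
      rw [e0]; rfl
    rw [e1]
    have e2 : (List.range n).map
          ((fun g => pc g x) ∘ fun t => itc x (zz x y (i + t + 1) (j + t)) (n - 1 - t)) =
        (List.range n).map (fun t => itc x (zz x y (i + t + 1) (j + t)) (n + 1 - 1 - t)) := by
      apply List.map_congr_left
      intro t ht
      rw [List.mem_range] at ht
      simp only [Function.comp]
      rw [← itc_succ]
      congr 1
      omega
    rw [e2, List.range_succ, List.map_append, List.prod_append]
    simp only [List.map_cons, List.map_nil, List.prod_cons, List.prod_nil, mul_one]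
    have e3 : n + 1 - 1 - n = 0 := by omega
    rw [e3, itc_zero]
    refine comm_zz x y hca (hmem n) ((ZsubP x y).list_prod_mem ?_)
    intro g hg
    obtain ⟨t, _, rfl⟩ := List.mem_map.mp hg
    exact itc_mem_Z x y hca (hmem t) _

lemma zeta_eq_wwP (p i j k : ℕ) (hi : 1 ≤ i) (hj : 1 ≤ j) :
    wwP p x y i j k = zeta x (cc x y i) (cc x y j) (p ^ k - 1) := by
  rw [zeta_cc x y hca i j hi hj (p ^ k - 1), wwP]
  have e : p ^ k - 1 - 1 = p ^ k - 2 := by omega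
  rw [e]

end FinalSec

theorem lemma_Lk_odd_ii (p : ℕ) (hp : p.Prime) (hodd : Odd p) (x y : G)
    (hca : ∀ z ∈ ZsubP x y, ∀ h ∈ Hsub x y, z * h = h * z)
    (hHp : ∀ h ∈ Hsub x y, h ^ p = 1)
    (k : ℕ) (hk : 1 ≤ k) (h₁ h₂ : G) (hh₁ : h₁ ∈ Hsub x y) (hh₂ : h₂ ∈ Hsub x y) :
    (itc x h₁ (p ^ k - 1) * itc x h₂ (p ^ k - 1))⁻¹ * itc x (h₁ * h₂) (p ^ k - 1) ∈
      LsubP p x y k := by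
  have hW : Subgroup.closure {g : G | ∃ i j, 1 ≤ i ∧ 1 ≤ j ∧ g = wwP p x y i j k} ≤
      LsubP p x y k := by
    rw [Subgroup.closure_le]
    intro g hg
    exact Subgroup.subset_normalClosure (Or.inl (Or.inl hg))
  have key : ∀ a, a ∈ Hsub x y → ∀ b, b ∈ Hsub x y →
      zeta x a b (p ^ k - 1) ∈
        Subgroup.closure {g : G | ∃ i j, 1 ≤ i ∧ 1 ≤ j ∧ g = wwP p x y i j k} := by
    intro a ha b hb
    have ha' : a ∈ Subgroup.closure {g | ∃ i, 1 ≤ i ∧ g = cc x y i} := ha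
    have hb' : b ∈ Subgroup.closure {g | ∃ i, 1 ≤ i ∧ g = cc x y i} := hb
    clear ha hb
    induction ha', hb' using Subgroup.closure_induction₂ with
    | mem u v hu hv =>
      obtain ⟨i, hi, rfl⟩ := hu
      obtain ⟨j, hj, rfl⟩ := hv
      rw [← zeta_eq_wwP x y hca p i j k hi hj]
      exact Subgroup.subset_closure ⟨i, j, hi, hj, rfl⟩
    | one_left v hv => rw [zeta_one_left]; exact one_mem _
    | one_right u hu => rw [zeta_one_right]; exact one_mem _
    | mul_left u u' v hu hu' hv ih1 ih2 =>
      rw [zeta_mul_left x y hca hu hu' hv]; exact mul_mem ih1 ih2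
    | mul_right v v' u hv hv' hu ih1 ih2 =>
      rw [zeta_mul_right x y hca hu hv hv']; exact mul_mem ih1 ih2
    | inv_left u v hu hv ih =>
      rw [zeta_inv_left x y hca hu hv]; exact inv_mem ih
    | inv_right u v hu hv ih =>
      rw [zeta_inv_right x y hca hu hv]; exact inv_mem ih
  exact hW (key h₁ hh₁ h₂ hh₂)

end Paper
end

section
/- For every k ≥ 1, every m ≥ p^k and every n ≥ 1, the element z_{m,n} belongs to Γ^{p^k}; consequently ⟨z_{m,n} : m ≥ p^k, n ≥ 1⟩ ≤ Γ^{p^k}. (The lower bound of Proposition 5.2 of the paper: ⟨z_{m,n} : m ≥ p^k, n ∈ ℕ⟩ ≤ 𝔊(p)^{p^k} ∩ Z.) -/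
namespace Paper

variable {G : Type*} [Group G]

section AuxLemmas

variable {G : Type*} [Group G] {M : Type*} [Group M]

private lemma pc_map (f : G →* M) (a b : G) : f (pc a b) = pc (f a) (f b) := by
  simp [pc]

private lemma itc_map (f : G →* M) (x a : G) (r : ℕ) :
    f (itc x a r) = itc (f x) (f a) r := by
  induction r with
  | zero => rfl
  | succ r ih => rw [itc, itc, pc_map, ih]

private lemma cc_map (f : G →* M) (x y : G) (i : ℕ) : f (cc x y i) = cc (f x) (f y) i :=
  itc_map f x y (i - 1)

private lemma zz_map (f : G →* M) (x y : G) (m n : ℕ) :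
    f (zz x y m n) = zz (f x) (f y) m n := by
  rw [zz, pc_map, cc_map, cc_map, zz]

private lemma cc_succ (x y : G) {i : ℕ} (hi : 1 ≤ i) :
    cc x y (i + 1) = pc (cc x y i) x := by
  obtain ⟨j, rfl⟩ : ∃ j, i = j + 1 := ⟨i - 1, by omega⟩
  show itc x y (j + 1 + 1 - 1) = pc (itc x y (j + 1 - 1)) x
  simp only [Nat.add_sub_cancel]
  rw [itc]

private lemma conj_cc (x y : G) {i : ℕ} (hi : 1 ≤ i) :
    x⁻¹ * cc x y i * x = cc x y i * cc x y (i + 1) := by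
  rw [cc_succ x y hi, pc]
  group

private lemma conj_eq {z c : G} (h : z * c = c * z) : c⁻¹ * z * c = z := by
  rw [mul_assoc, h, ← mul_assoc, inv_mul_cancel, one_mul]

private lemma conj_eq' {z c : G} (h : z * c = c * z) : c * z * c⁻¹ = z := by
  rw [← h, mul_assoc, mul_inv_cancel, mul_one]

private lemma comm_inv_left {z c : G} (h : z * c = c * z) : z⁻¹ * c = c * z⁻¹ := by
  have : Commute z c := h
  exact this.inv_left

/-- `conjIter x h t = x^{-t} h x^t`. -/
private def conjIter {G : Type*} [Group G] (x h : G) : ℕ → G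
  | 0 => h
  | t + 1 => x⁻¹ * conjIter x h t * x

private lemma conj_list_prod (x : G) (l : List G) :
    (l.map (fun g => x⁻¹ * g * x)).prod = x⁻¹ * l.prod * x := by
  induction l with
  | nil => simp
  | cons a l ih =>
    rw [List.map_cons, List.prod_cons, ih, List.prod_cons]
    group

private lemma pow_mul_expand (x h : G) (N : ℕ) :
    (x * h) ^ N = x ^ N * (((List.range N).map (conjIter x h)).reverse).prod := by
  induction N with
  | zero => simp
  | succ N ih =>
    have hmap : (List.range (N + 1)).map (conjIter x h) =
        h :: ((List.range N).map (conjIter x h)).map (fun g => x⁻¹ * g * x) := by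
      rw [List.range_succ_eq_map, List.map_cons, List.map_map, List.map_map]
      refine congrArg _ (List.map_congr_left fun t _ => ?_)
      rfl
    have h2 : ((List.range (N + 1)).map (conjIter x h)).reverse.prod
        = (x⁻¹ * ((List.range N).map (conjIter x h)).reverse.prod * x) * h := by
      rw [hmap, List.reverse_cons, List.prod_append, List.prod_cons, List.prod_nil, mul_one,
        ← List.map_reverse, conj_list_prod]
    rw [pow_succ (x * h), ih, h2, pow_succ x]
    group

private lemma list_range_prod {R : Type*} [CommMonoid R] (f : ℕ → R) (N : ℕ) :
    ((List.range N).map f).prod = ∏ t ∈ Finset.range N, f t := by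
  induction N with
  | zero => simp
  | succ N ih =>
    rw [List.range_succ, List.map_append, List.prod_append, Finset.prod_range_succ, ih]
    simp

private lemma sum_range_choose_eq (N s : ℕ) :
    ∑ t ∈ Finset.range N, t.choose s = N.choose (s + 1) := by
  induction N with
  | zero => simp
  | succ N ih =>
    rw [Finset.sum_range_succ, ih, Nat.choose_succ_succ, Nat.add_comm]

end AuxLemmas

set_option maxHeartbeats 1000000 in
private lemma core {G : Type*} [Group G] (p k : ℕ) (hp : p.Prime) (x y : G)
    (hca : ∀ z ∈ ZsubP x y, ∀ h ∈ Hsub x y, z * h = h * z)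
    (hHp : ∀ h ∈ Hsub x y, h ^ p = 1)
    (hexp : ∀ g : G, g ^ p ^ k = 1) :
    ∀ m n : ℕ, p ^ k ≤ m → 1 ≤ n → zz x y m n = 1 := by
  have hc_mem : ∀ i : ℕ, cc x y i ∈ Hsub x y := by
    intro i
    cases i with
    | zero => exact Subgroup.subset_closure ⟨1, le_refl 1, rfl⟩
    | succ j => exact Subgroup.subset_closure ⟨j + 1, by omega, rfl⟩
  have hz_mem : ∀ m n : ℕ, 1 ≤ m → 1 ≤ n → zz x y m n ∈ ZsubP x y := by
    intro m n hm hn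
    exact Subgroup.subset_closure ⟨m, n, hm, hn, rfl⟩
  -- commutators of elements of H lie in Z
  have hpcZ : ∀ a ∈ Subgroup.closure {g | ∃ i, 1 ≤ i ∧ g = cc x y i},
      ∀ b ∈ Subgroup.closure {g | ∃ i, 1 ≤ i ∧ g = cc x y i}, pc a b ∈ ZsubP x y := by
    intro a ha
    induction ha using Subgroup.closure_induction with
    | mem a ha =>
      obtain ⟨i, hi, rfl⟩ := ha
      intro b hb
      induction hb using Subgroup.closure_induction with
      | mem b hb => obtain ⟨j, hj, rfl⟩ := hb; exact hz_mem i j hi hj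
      | one => simpa [pc] using (ZsubP x y).one_mem
      | mul b c hb hc ihb ihc =>
        have h1 : pc (cc x y i) (b * c)
            = pc (cc x y i) c * (c⁻¹ * pc (cc x y i) b * c) := by
          simp only [pc]; group
        rw [h1, conj_eq (hca _ ihb c hc)]
        exact mul_mem ihc ihb
      | inv b hb ihb =>
        have h1 : pc (cc x y i) b⁻¹ = b * (pc (cc x y i) b)⁻¹ * b⁻¹ := by
          simp only [pc]; group
        rw [h1, conj_eq' (comm_inv_left (hca _ ihb b hb))]
        exact inv_mem ihb
    | one => intro b hb; simpa [pc] using (ZsubP x y).one_mem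
    | mul a c ha hc iha ihc =>
      intro b hb
      have h1 : pc (a * c) b = c⁻¹ * pc a b * c * pc c b := by simp only [pc]; group
      rw [h1, conj_eq (hca _ (iha b hb) c hc)]
      exact mul_mem (iha b hb) (ihc b hb)
    | inv a ha iha =>
      intro b hb
      have h1 : pc a⁻¹ b = a * (pc a b)⁻¹ * a⁻¹ := by simp only [pc]; group
      rw [h1, conj_eq' (comm_inv_left (hca _ (iha b hb) a ha))]
      exact inv_mem (iha b hb)
  -- conjugation by x preserves H
  have hphiH : ∀ h ∈ Subgroup.closure {g | ∃ i, 1 ≤ i ∧ g = cc x y i},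
      x⁻¹ * h * x ∈ Hsub x y := by
    intro h hh
    induction hh using Subgroup.closure_induction with
    | mem h hh =>
      obtain ⟨i, hi, rfl⟩ := hh
      rw [conj_cc x y hi]
      exact mul_mem (hc_mem i) (hc_mem (i + 1))
    | one => simpa using (Hsub x y).one_mem
    | mul a b ha hb iha ihb =>
      have h1 : x⁻¹ * (a * b) * x = (x⁻¹ * a * x) * (x⁻¹ * b * x) := by group
      rw [h1]; exact mul_mem iha ihb
    | inv a ha iha =>
      have h1 : x⁻¹ * a⁻¹ * x = (x⁻¹ * a * x)⁻¹ := by group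
      rw [h1]; exact inv_mem iha
  -- conjugation by x preserves Z
  have hphiZ : ∀ z ∈ Subgroup.closure {g | ∃ m n, 1 ≤ m ∧ 1 ≤ n ∧ g = zz x y m n},
      x⁻¹ * z * x ∈ ZsubP x y := by
    intro z hz
    induction hz using Subgroup.closure_induction with
    | mem z hz =>
      obtain ⟨m, n, hm, hn, rfl⟩ := hz
      have h1 : x⁻¹ * zz x y m n * x
          = pc (x⁻¹ * cc x y m * x) (x⁻¹ * cc x y n * x) := by
        simp only [zz, pc]; group
      rw [h1]
      exact hpcZ _ (hphiH _ (hc_mem m)) _ (hphiH _ (hc_mem n))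
    | one => simpa using (ZsubP x y).one_mem
    | mul a b ha hb iha ihb =>
      have h1 : x⁻¹ * (a * b) * x = (x⁻¹ * a * x) * (x⁻¹ * b * x) := by group
      rw [h1]; exact mul_mem iha ihb
    | inv a ha iha =>
      have h1 : x⁻¹ * a⁻¹ * x = (x⁻¹ * a * x)⁻¹ := by group
      rw [h1]; exact inv_mem iha
  -- the quotient H/Z
  set K : Subgroup (Hsub x y) := (ZsubP x y).subgroupOf (Hsub x y) with hK
  haveI hKnormal : K.Normal := by
    constructor
    intro z hz h
    rw [hK, Subgroup.mem_subgroupOf] at hz ⊢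
    have h2 : ((h * z * h⁻¹ : (Hsub x y)) : G) = (h : G) * (z : G) * (h : G)⁻¹ := by
      simp
    rw [h2, conj_eq' (hca _ hz _ h.2)]
    exact hz
  letI : CommGroup ((Hsub x y) ⧸ K) :=
    { (inferInstance : Group ((Hsub x y) ⧸ K)) with
      mul_comm := by
        intro a b
        refine QuotientGroup.induction_on a fun a => QuotientGroup.induction_on b fun b => ?_
        rw [← QuotientGroup.mk_mul, ← QuotientGroup.mk_mul]
        refine (QuotientGroup.eq).mpr ?_
        rw [hK, Subgroup.mem_subgroupOf]
        have h2 : (((a * b)⁻¹ * (b * a) : (Hsub x y)) : G) = pc (b : G) (a : G) := by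
          simp [pc, mul_assoc]
        rw [h2]
        exact hpcZ _ b.2 _ a.2 }
  have hexpP : ∀ q : (Hsub x y) ⧸ K, q ^ p = 1 := by
    intro q
    refine QuotientGroup.induction_on q fun h => ?_
    have hp1 : h ^ p = (1 : (Hsub x y)) := Subtype.ext (by simpa using hHp (h : G) h.2)
    rw [← QuotientGroup.mk_pow, hp1]
    rfl
  -- the shift endomorphism
  let φH : (Hsub x y) →* (Hsub x y) :=
    { toFun := fun a => ⟨x⁻¹ * (a : G) * x, hphiH _ a.2⟩
      map_one' := Subtype.ext (by simp)
      map_mul' := fun a b => Subtype.ext (by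
        show x⁻¹ * ((a : G) * (b : G)) * x = (x⁻¹ * (a : G) * x) * (x⁻¹ * (b : G) * x)
        group) }
  have hker : K ≤ ((QuotientGroup.mk' K).comp φH).ker := by
    intro z hz
    rw [MonoidHom.mem_ker, MonoidHom.comp_apply, QuotientGroup.mk'_apply,
      QuotientGroup.eq_one_iff]
    rw [hK, Subgroup.mem_subgroupOf] at hz ⊢
    exact hphiZ _ hz
  let φQ : ((Hsub x y) ⧸ K) →* ((Hsub x y) ⧸ K) :=
    QuotientGroup.lift K ((QuotientGroup.mk' K).comp φH) hker
  let cH : ℕ → (Hsub x y) := fun i => ⟨cc x y i, hc_mem i⟩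
  let e : ℕ → (Hsub x y) ⧸ K := fun i => QuotientGroup.mk (cH i)
  have hφQmk : ∀ a : (Hsub x y), φQ (QuotientGroup.mk a) = QuotientGroup.mk (φH a) :=
    fun a => rfl
  have hφe : ∀ i, 1 ≤ i → φQ (e i) = e i * e (i + 1) := by
    intro i hi
    show φQ (QuotientGroup.mk (cH i)) = QuotientGroup.mk (cH i) * QuotientGroup.mk (cH (i + 1))
    rw [hφQmk, ← QuotientGroup.mk_mul]
    exact congrArg _ (Subtype.ext (conj_cc x y hi))
  -- binomial expansion of iterates
  have hB1 : ∀ (t n : ℕ), 1 ≤ n →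
      (⇑φQ)^[t] (e n) = ∏ s ∈ Finset.range (t + 1), e (n + s) ^ Nat.choose t s := by
    intro t
    induction t with
    | zero =>
      intro n hn
      simp
    | succ t ih =>
      intro n hn
      rw [Function.iterate_succ_apply', ih n hn, map_prod]
      have h1 : ∀ s ∈ Finset.range (t + 1),
          φQ (e (n + s) ^ Nat.choose t s)
            = e (n + s) ^ Nat.choose t s * e (n + s + 1) ^ Nat.choose t s := by
        intro s _
        rw [map_pow, hφe (n + s) (by omega), mul_pow]
      rw [Finset.prod_congr rfl h1, Finset.prod_mul_distrib]
      rw [Finset.prod_range_succ' (fun s => e (n + s) ^ Nat.choose (t + 1) s) (t + 1),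
        Finset.prod_range_succ' (fun s => e (n + s) ^ Nat.choose t s) t]
      have hR2 : ∀ s ∈ Finset.range (t + 1),
          e (n + (s + 1)) ^ Nat.choose (t + 1) (s + 1)
            = e (n + s + 1) ^ Nat.choose t s * e (n + s + 1) ^ Nat.choose t (s + 1) := by
        intro s _
        rw [Nat.choose_succ_succ', pow_add, ← add_assoc]
      rw [Finset.prod_congr rfl hR2, Finset.prod_mul_distrib]
      have hD : (∏ s ∈ Finset.range (t + 1), e (n + s + 1) ^ Nat.choose t (s + 1))
          = ∏ s ∈ Finset.range t, e (n + (s + 1)) ^ Nat.choose t (s + 1) := by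
        rw [Finset.prod_range_succ, Nat.choose_succ_self, pow_zero, mul_one]
        exact Finset.prod_congr rfl fun s _ => by rw [← add_assoc]
      rw [hD]
      simp only [← add_assoc, add_zero, Nat.choose_zero_right, pow_one]
      ac_rfl
  -- the main relation
  intro m n hm hn
  have hN1 : 1 ≤ p ^ k := Nat.one_le_pow _ _ hp.pos
  obtain ⟨n0, hn0, hn0m⟩ : ∃ n0, 1 ≤ n0 ∧ n0 + (p ^ k - 1) = m :=
    ⟨m + 1 - p ^ k, by omega, by omega⟩
  have hlist : (((List.range (p ^ k)).map (conjIter x (cc x y n0))).reverse).prod = 1 := by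
    have h0 := pow_mul_expand x (cc x y n0) (p ^ k)
    rw [hexp (x * cc x y n0), hexp x, one_mul] at h0
    exact h0.symm
  have hcmem : ∀ t, conjIter x (cc x y n0) t ∈ Hsub x y := by
    intro t
    induction t with
    | zero => exact hc_mem n0
    | succ t ih => exact hphiH _ ih
  have hiter : ∀ t, (QuotientGroup.mk (⟨conjIter x (cc x y n0) t, hcmem t⟩ : (Hsub x y))
      : (Hsub x y) ⧸ K) = (⇑φQ)^[t] (e n0) := by
    intro t
    induction t with
    | zero => rfl
    | succ t ih =>
      rw [Function.iterate_succ_apply', ← ih, hφQmk]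
      rfl
  have hprod1 : ∏ t ∈ Finset.range (p ^ k), (⇑φQ)^[t] (e n0) = 1 := by
    have hLH : ((List.range (p ^ k)).map
        (fun t => (⟨conjIter x (cc x y n0) t, hcmem t⟩ : (Hsub x y)))).reverse.prod
          = (1 : (Hsub x y)) := by
      apply Subtype.ext
      rw [SubmonoidClass.coe_list_prod, List.map_reverse, List.map_map]
      simpa [Function.comp_def] using hlist
    have h2 := congrArg (QuotientGroup.mk' K) hLH
    rw [map_list_prod, map_one, List.map_reverse, List.prod_reverse, List.map_map,
      list_range_prod] at h2
    calc ∏ t ∈ Finset.range (p ^ k), (⇑φQ)^[t] (e n0)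
        = ∏ t ∈ Finset.range (p ^ k),
            ((QuotientGroup.mk' K) ∘ fun t => (⟨conjIter x (cc x y n0) t, hcmem t⟩ : (Hsub x y))) t :=
          Finset.prod_congr rfl fun t _ => (hiter t).symm
      _ = 1 := h2
  have hkey : e (n0 + (p ^ k - 1)) = 1 := by
    have h3 : ∏ t ∈ Finset.range (p ^ k), (⇑φQ)^[t] (e n0)
        = ∏ s ∈ Finset.range (p ^ k), e (n0 + s) ^ Nat.choose (p ^ k) (s + 1) := by
      calc ∏ t ∈ Finset.range (p ^ k), (⇑φQ)^[t] (e n0)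
          = ∏ t ∈ Finset.range (p ^ k), ∏ s ∈ Finset.range (p ^ k),
              e (n0 + s) ^ Nat.choose t s := by
            refine Finset.prod_congr rfl fun t ht => ?_
            rw [hB1 t n0 hn0]
            refine Finset.prod_subset (Finset.range_subset_range.mpr ?_) ?_
            · exact Nat.succ_le_of_lt (Finset.mem_range.mp ht)
            · intro s hs hns
              have hts : t < s := by
                simp only [Finset.mem_range] at hs hns
                omega
              rw [Nat.choose_eq_zero_of_lt hts, pow_zero]
        _ = ∏ s ∈ Finset.range (p ^ k), ∏ t ∈ Finset.range (p ^ k),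
              e (n0 + s) ^ Nat.choose t s := Finset.prod_comm
        _ = ∏ s ∈ Finset.range (p ^ k),
              e (n0 + s) ^ (∑ t ∈ Finset.range (p ^ k), Nat.choose t s) :=
            Finset.prod_congr rfl fun s _ => Finset.prod_pow_eq_pow_sum _ _ _
        _ = ∏ s ∈ Finset.range (p ^ k), e (n0 + s) ^ Nat.choose (p ^ k) (s + 1) :=
            Finset.prod_congr rfl fun s _ => by rw [sum_range_choose_eq]
    rw [h3] at hprod1
    have h4 : ∏ s ∈ Finset.range (p ^ k), e (n0 + s) ^ Nat.choose (p ^ k) (s + 1)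
        = e (n0 + (p ^ k - 1)) := by
      rw [Finset.prod_eq_single_of_mem (p ^ k - 1) (Finset.mem_range.mpr (by omega))
        (fun s hs hne => ?_)]
      · rw [show p ^ k - 1 + 1 = p ^ k by omega, Nat.choose_self, pow_one]
      · have hdvd : p ∣ Nat.choose (p ^ k) (s + 1) := by
          refine Nat.Prime.dvd_choose_pow hp (by omega) ?_
          have := Finset.mem_range.mp hs
          omega
        obtain ⟨c, hc⟩ := hdvd
        rw [hc, pow_mul, hexpP, one_pow]
    rw [h4] at hprod1
    exact hprod1
  have hcmZ : cc x y m ∈ ZsubP x y := by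
    rw [hn0m] at hkey
    have h5 := (QuotientGroup.eq_one_iff (cH m)).mp hkey
    rw [hK, Subgroup.mem_subgroupOf] at h5
    exact h5
  have hcom := hca _ hcmZ (cc x y n) (hc_mem n)
  have h2 : (cc x y n)⁻¹ * (cc x y m * cc x y n) = cc x y m := by
    rw [hcom, ← mul_assoc, inv_mul_cancel, one_mul]
  show pc (cc x y m) (cc x y n) = 1
  rw [pc, mul_assoc, mul_assoc, h2, inv_mul_cancel]

theorem zz_mem_powers_odd (p : ℕ) (hp : p.Prime) (hodd : Odd p) (x y : G)
    (hca : ∀ z ∈ ZsubP x y, ∀ h ∈ Hsub x y, z * h = h * z)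
    (hHp : ∀ h ∈ Hsub x y, h ^ p = 1)
    (k : ℕ) (hk : 1 ≤ k) :
    (∀ m n : ℕ, p ^ k ≤ m → 1 ≤ n → zz x y m n ∈ powSubP G p k) ∧
      Subgroup.closure {g | ∃ m n, p ^ k ≤ m ∧ 1 ≤ n ∧ g = zz x y m n} ≤
        powSubP G p k := by
  haveI hNormal : (powSubP G p k).Normal := by
    have hconj : ∀ a ∈ Subgroup.closure {g : G | ∃ b : G, g = b ^ p ^ k},
        ∀ g : G, g * a * g⁻¹ ∈ powSubP G p k := by
      intro a ha
      induction ha using Subgroup.closure_induction with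
      | mem a ha =>
        obtain ⟨b, rfl⟩ := ha
        exact fun g => Subgroup.subset_closure ⟨g * b * g⁻¹, (conj_pow).symm⟩
      | one => intro g; simpa using (powSubP G p k).one_mem
      | mul a b ha hb iha ihb =>
        intro g
        have h1 : g * (a * b) * g⁻¹ = (g * a * g⁻¹) * (g * b * g⁻¹) := by group
        rw [h1]; exact mul_mem (iha g) (ihb g)
      | inv a ha iha =>
        intro g
        have h1 : g * a⁻¹ * g⁻¹ = (g * a * g⁻¹)⁻¹ := by group
        rw [h1]; exact inv_mem (iha g)
    exact ⟨fun a ha g => hconj a ha g⟩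
  set π : G →* G ⧸ powSubP G p k := QuotientGroup.mk' (powSubP G p k) with hπ
  have hmapH : (Hsub x y).map π = Hsub (π x) (π y) := by
    rw [Hsub, Hsub, MonoidHom.map_closure]
    congr 1
    ext g
    simp only [Set.mem_image, Set.mem_setOf_eq]
    constructor
    · rintro ⟨h, ⟨i, hi, rfl⟩, rfl⟩
      exact ⟨i, hi, cc_map π x y i⟩
    · rintro ⟨i, hi, rfl⟩
      exact ⟨cc x y i, ⟨i, hi, rfl⟩, cc_map π x y i⟩
  have hmapZ : (ZsubP x y).map π = ZsubP (π x) (π y) := by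
    rw [ZsubP, ZsubP, MonoidHom.map_closure]
    congr 1
    ext g
    simp only [Set.mem_image, Set.mem_setOf_eq]
    constructor
    · rintro ⟨h, ⟨m, n, hm, hn, rfl⟩, rfl⟩
      exact ⟨m, n, hm, hn, zz_map π x y m n⟩
    · rintro ⟨m, n, hm, hn, rfl⟩
      exact ⟨zz x y m n, ⟨m, n, hm, hn, rfl⟩, zz_map π x y m n⟩
  have hcaQ : ∀ z ∈ ZsubP (π x) (π y), ∀ h ∈ Hsub (π x) (π y), z * h = h * z := by
    intro z hz h hh
    rw [← hmapZ] at hz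
    rw [← hmapH] at hh
    obtain ⟨z1, hz1, rfl⟩ := Subgroup.mem_map.mp hz
    obtain ⟨h1, hh1, rfl⟩ := Subgroup.mem_map.mp hh
    rw [← map_mul, ← map_mul, hca z1 hz1 h1 hh1]
  have hHpQ : ∀ h ∈ Hsub (π x) (π y), h ^ p = 1 := by
    intro h hh
    rw [← hmapH] at hh
    obtain ⟨h1, hh1, rfl⟩ := Subgroup.mem_map.mp hh
    rw [← map_pow, hHp h1 hh1, map_one]
  have hexpQ : ∀ g : G ⧸ powSubP G p k, g ^ p ^ k = 1 := by
    intro g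
    refine QuotientGroup.induction_on g fun g => ?_
    have : (QuotientGroup.mk g : G ⧸ powSubP G p k) = π g := rfl
    rw [this, ← map_pow]
    exact (QuotientGroup.eq_one_iff _).mpr (Subgroup.subset_closure ⟨g, rfl⟩)
  have hmain : ∀ m n : ℕ, p ^ k ≤ m → 1 ≤ n → zz x y m n ∈ powSubP G p k := by
    intro m n hm hn
    have h1 := core p k hp (π x) (π y) hcaQ hHpQ hexpQ m n hm hn
    rw [← zz_map π x y m n] at h1
    exact (QuotientGroup.eq_one_iff _).mp h1
  refine ⟨hmain, ?_⟩
  rw [Subgroup.closure_le]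
  rintro g ⟨m, n, hm, hn, rfl⟩
  exact hmain m n hm hn

end Paper
end
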